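/- Let A ⊆ ℝ be lacunarily statistically ward compact and f : A → ℝ lacunarily statistically ward continuous on A. Then f is uniformly continuous on A. -/

import Mathlib

open Filter Finset Topology

/-- A sequence `x` converges statistically to `ℓ`. -/
def StatConvTo (x : ℕ → ℝ) (ℓ : ℝ) : Prop :=
  ∀ ε > 0, Tendsto (fun n : ℕ =>
      ((((Finset.range n).filter fun k => ε ≤ |x k - ℓ|).card : ℝ) / (n : ℝ)))
    atTop (𝓝 0)

/-- A sequence is statistically quasi-Cauchy if its difference sequence
converges statistically to `0`. -/
def StatQC (a : ℕ → ℝ) : Prop :=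
  StatConvTo (fun n => a (n + 1) - a n) 0

/-- A lacunary sequence `θ = (k_r)`: strictly increasing, `k 0 = 0`,
and `h_r = k_{r+1} - k_r → ∞`. -/
structure Lacunary where
  k : ℕ → ℕ
  strictMono : StrictMono k
  zero : k 0 = 0
  h_tendsto : Tendsto (fun r => k (r + 1) - k r) atTop atTop

/-- Lacunary statistical convergence of `x` to `ℓ` with respect to `θ`. -/
def LacStatConvTo (θ : Lacunary) (x : ℕ → ℝ) (ℓ : ℝ) : Prop :=
  ∀ ε > 0, Tendsto (fun r : ℕ =>
      ((((Finset.Ioc (θ.k r) (θ.k (r + 1))).filter fun i => ε ≤ |x i - ℓ|).card : ℝ)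
        / ((θ.k (r + 1) - θ.k r : ℕ) : ℝ)))
    atTop (𝓝 0)

/-- A sequence is lacunarily statistically quasi-Cauchy (w.r.t. `θ`). -/
def LacStatQC (θ : Lacunary) (a : ℕ → ℝ) : Prop :=
  LacStatConvTo θ (fun n => a (n + 1) - a n) 0

/-- `liminf q_r > 1` where `q_r = k_{r+1} / k_r`. -/
def LiminfQGtOne (θ : Lacunary) : Prop :=
  ∃ a : ℝ, 1 < a ∧ ∀ᶠ r in atTop, a ≤ (θ.k (r + 1) : ℝ) / (θ.k r : ℝ)

/-- `limsup q_r < ∞` where `q_r = k_{r+1} / k_r`. -/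
def LimsupQLtTop (θ : Lacunary) : Prop :=
  ∃ H : ℝ, ∀ᶠ r in atTop, (θ.k (r + 1) : ℝ) / (θ.k r : ℝ) ≤ H

/-- `A` is lacunarily statistically ward compact w.r.t. `θ`. -/
def LacStatWardCompact (θ : Lacunary) (A : Set ℝ) : Prop :=
  ∀ x : ℕ → ℝ, (∀ n, x n ∈ A) →
    ∃ φ : ℕ → ℕ, StrictMono φ ∧ LacStatQC θ (x ∘ φ)

/-- `f` is lacunarily statistically ward continuous on `A` w.r.t. `θ`. -/
def LacStatWardContOn (θ : Lacunary) (f : ℝ → ℝ) (A : Set ℝ) : Prop :=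
  ∀ x : ℕ → ℝ, (∀ n, x n ∈ A) → LacStatQC θ x → LacStatQC θ (f ∘ x)

namespace Lacunary
variable (θ : Lacunary)

lemma h_pos (r : ℕ) : 0 < θ.k (r+1) - θ.k r :=
  Nat.sub_pos_of_lt (θ.strictMono (Nat.lt_succ_self r))

lemma hcast_pos (r : ℕ) : (0:ℝ) < ((θ.k (r+1) - θ.k r : ℕ) : ℝ) := by
  exact_mod_cast θ.h_pos r

lemma hcast_eq (r : ℕ) : ((θ.k (r+1) - θ.k r : ℕ) : ℝ) = (θ.k (r+1) : ℝ) - (θ.k r : ℝ) := by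
  have := (θ.strictMono (Nat.lt_succ_self r)).le
  push_cast [Nat.cast_sub this]
  ring

lemma hcast_tendsto : Tendsto (fun r => ((θ.k (r+1) - θ.k r : ℕ) : ℝ)) atTop atTop :=
  tendsto_natCast_atTop_atTop.comp θ.h_tendsto

end Lacunary

/-- Key doubling lemma: if the bad set `p` has lacunary density zero, then
so does the set `{2j+1 : p j}`, provided `liminf q_r > 1`. -/
lemma lac_double (θ : Lacunary) (a : ℝ) (ha : 1 < a)
    (haev : ∀ᶠ r in atTop, a ≤ (θ.k (r + 1) : ℝ) / (θ.k r : ℝ))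
    (p : ℕ → Prop) [DecidablePred p]
    (hp : Tendsto (fun s : ℕ =>
      ((((Finset.Ioc (θ.k s) (θ.k (s+1))).filter p).card : ℝ)
        / ((θ.k (s+1) - θ.k s : ℕ) : ℝ))) atTop (𝓝 0)) :
    Tendsto (fun r : ℕ =>
      ((((Finset.Ioc (θ.k r) (θ.k (r+1))).filter (fun i => i % 2 = 1 ∧ p (i/2))).card : ℝ)
        / ((θ.k (r+1) - θ.k r : ℕ) : ℝ))) atTop (𝓝 0) := by
  obtain ⟨R0, hR0⟩ := eventually_atTop.mp haev
  set C : ℝ := a / (a - 1) with hCdef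
  have ha1 : (0:ℝ) < a - 1 := by linarith
  have hC : 0 < C := div_pos (by linarith) ha1
  have hCh : ∀ r, R0 ≤ r → 1 ≤ r → (θ.k (r+1) : ℝ) ≤ C * ((θ.k (r+1) - θ.k r : ℕ) : ℝ) := by
    intro r hr hr1
    have hkrpos : 0 < (θ.k r : ℝ) := by
      have : θ.k 0 < θ.k r := θ.strictMono (by omega)
      rw [θ.zero] at this
      exact_mod_cast this
    have h1 : a * (θ.k r : ℝ) ≤ (θ.k (r+1) : ℝ) := by
      have := hR0 r hr
      rw [le_div_iff₀ hkrpos] at this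
      linarith
    rw [θ.hcast_eq r, hCdef, div_mul_eq_mul_div, le_div_iff₀ ha1]
    nlinarith
  rw [Metric.tendsto_atTop]
  intro ε hε
  set δ : ℝ := ε / (2 * C) with hδdef
  have hδ : 0 < δ := by positivity
  obtain ⟨S, hS⟩ := (Metric.tendsto_atTop.mp hp) δ hδ
  have hSb : ∀ s, S ≤ s → (((Finset.Ioc (θ.k s) (θ.k (s+1))).filter p).card : ℝ)
      ≤ δ * ((θ.k (s+1) : ℝ) - (θ.k s : ℝ)) := by
    intro s hs
    have h1 := hS s hs
    rw [Real.dist_eq, sub_zero, abs_of_nonneg (by positivity)] at h1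
    rw [div_lt_iff₀ (θ.hcast_pos s)] at h1
    rw [← θ.hcast_eq s]
    linarith
  have key : ∀ m : ℕ, (((Finset.Ioc (θ.k S) (θ.k (S+1+m))).filter p).card : ℝ)
      ≤ δ * ((θ.k (S+1+m) : ℝ) - (θ.k S : ℝ)) := by
    intro m
    induction m with
    | zero => simpa using hSb S le_rfl
    | succ m ih =>
      have hle1 : θ.k S ≤ θ.k (S+1+m) := θ.strictMono.monotone (by omega)
      have hle2 : θ.k (S+1+m) ≤ θ.k (S+1+m+1) := θ.strictMono.monotone (by omega)
      have hsplit : Finset.Ioc (θ.k S) (θ.k (S+1+(m+1)))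
          = Finset.Ioc (θ.k S) (θ.k (S+1+m)) ∪ Finset.Ioc (θ.k (S+1+m)) (θ.k (S+1+m+1)) := by
        rw [Finset.Ioc_union_Ioc_eq_Ioc hle1 hle2]
        rfl
      rw [hsplit, Finset.filter_union]
      calc ((((Finset.Ioc (θ.k S) (θ.k (S+1+m))).filter p)
              ∪ ((Finset.Ioc (θ.k (S+1+m)) (θ.k (S+1+m+1))).filter p)).card : ℝ)
          ≤ (((Finset.Ioc (θ.k S) (θ.k (S+1+m))).filter p).card : ℝ)
            + (((Finset.Ioc (θ.k (S+1+m)) (θ.k (S+1+m+1))).filter p).card : ℝ) := by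
            exact_mod_cast Finset.card_union_le _ _
        _ ≤ δ * ((θ.k (S+1+m) : ℝ) - (θ.k S : ℝ))
            + δ * ((θ.k (S+1+m+1) : ℝ) - (θ.k (S+1+m) : ℝ)) :=
            add_le_add ih (hSb (S+1+m) (by omega))
        _ = δ * ((θ.k (S+1+(m+1)) : ℝ) - (θ.k S : ℝ)) := by
            have : S+1+(m+1) = S+1+m+1 := by omega
            rw [this]; ring
  have key' : ∀ r, S ≤ r → (((Finset.Ioc (θ.k S) (θ.k (r+1))).filter p).card : ℝ)
      ≤ δ * ((θ.k (r+1) : ℝ) - (θ.k S : ℝ)) := by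
    intro r hr
    obtain ⟨m, rfl⟩ := Nat.exists_eq_add_of_le hr
    have : S + m + 1 = S + 1 + m := by omega
    rw [this]
    exact key m
  refine ⟨max (max R0 1) (max S (2 * θ.k S + 2)), fun r hr => ?_⟩
  have hrR0 : R0 ≤ r := le_trans (le_max_of_le_left (le_max_left _ _)) hr
  have hr1 : 1 ≤ r := le_trans (le_max_of_le_left (le_max_right _ _)) hr
  have hrS : S ≤ r := le_trans (le_max_of_le_right (le_max_left _ _)) hr
  have hrk : 2 * θ.k S + 2 ≤ r := le_trans (le_max_of_le_right (le_max_right _ _)) hr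
  have hkr : 2 * θ.k S + 2 ≤ θ.k r := le_trans hrk θ.strictMono.le_apply
  have hcount : ((Finset.Ioc (θ.k r) (θ.k (r+1))).filter (fun i => i % 2 = 1 ∧ p (i/2))).card
      ≤ ((Finset.Ioc (θ.k S) (θ.k (r+1))).filter p).card := by
    apply Finset.card_le_card_of_injOn (fun i => i / 2)
    · intro i hi
      simp only [Finset.mem_coe, Finset.mem_filter, Finset.mem_Ioc] at hi ⊢
      obtain ⟨⟨hi1, hi2⟩, hodd, hpi⟩ := hi
      exact ⟨⟨by omega, by omega⟩, hpi⟩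
    · intro i hi j hj hij
      simp only [Finset.mem_coe, Finset.mem_filter, Finset.mem_Ioc] at hi hj
      obtain ⟨⟨-, -⟩, hi2, -⟩ := hi
      obtain ⟨⟨-, -⟩, hj2, -⟩ := hj
      have hij' : i / 2 = j / 2 := hij
      omega
  have hnum : ((((Finset.Ioc (θ.k r) (θ.k (r+1))).filter (fun i => i % 2 = 1 ∧ p (i/2))).card : ℝ))
      ≤ δ * C * ((θ.k (r+1) - θ.k r : ℕ) : ℝ) := by
    calc ((((Finset.Ioc (θ.k r) (θ.k (r+1))).filter (fun i => i % 2 = 1 ∧ p (i/2))).card : ℝ))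
        ≤ (((Finset.Ioc (θ.k S) (θ.k (r+1))).filter p).card : ℝ) := by exact_mod_cast hcount
      _ ≤ δ * ((θ.k (r+1) : ℝ) - (θ.k S : ℝ)) := key' r hrS
      _ ≤ δ * (θ.k (r+1) : ℝ) := by
          have : (0:ℝ) ≤ (θ.k S : ℝ) := Nat.cast_nonneg _
          nlinarith
      _ ≤ δ * (C * ((θ.k (r+1) - θ.k r : ℕ) : ℝ)) := by
          have := hCh r hrR0 hr1
          nlinarith
      _ = δ * C * ((θ.k (r+1) - θ.k r : ℕ) : ℝ) := by ring
  rw [Real.dist_eq, sub_zero, abs_of_nonneg (by positivity)]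
  have hpos := θ.hcast_pos r
  rw [div_lt_iff₀ hpos]
  have hδC : δ * C = ε / 2 := by
    rw [hδdef]
    field_simp
  calc ((((Finset.Ioc (θ.k r) (θ.k (r+1))).filter (fun i => i % 2 = 1 ∧ p (i/2))).card : ℝ))
      ≤ δ * C * ((θ.k (r+1) - θ.k r : ℕ) : ℝ) := hnum
    _ = (ε/2) * ((θ.k (r+1) - θ.k r : ℕ) : ℝ) := by rw [hδC]
    _ < ε * ((θ.k (r+1) - θ.k r : ℕ) : ℝ) := by nlinarith

theorem lacStatWardCont_on_wardCompact_uniformlyContinuous (θ : Lacunary)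
    (hθ : LiminfQGtOne θ) (A : Set ℝ) (f : ℝ → ℝ)
    (hA : LacStatWardCompact θ A) (hf : LacStatWardContOn θ f A) :
    UniformContinuousOn f A := by
  obtain ⟨a, ha, haev⟩ := hθ
  by_contra hUC
  rw [Metric.uniformContinuousOn_iff] at hUC
  push_neg at hUC
  obtain ⟨ε0, hε0, hbad⟩ := hUC
  have hchoice : ∀ n : ℕ, ∃ u ∈ A, ∃ v ∈ A,
      dist u v < 1/((n:ℝ)+1) ∧ ε0 ≤ dist (f u) (f v) := by
    intro n
    obtain ⟨u, hu, v, hv, h1, h2⟩ := hbad (1/((n:ℝ)+1)) (by positivity)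
    exact ⟨u, hu, v, hv, h1, h2⟩
  choose x hxA y hyA hxy hfxy using hchoice
  obtain ⟨φ, hφ, hqc⟩ := hA x hxA
  set t : ℕ → ℝ := fun i => if i % 2 = 0 then x (φ (i/2)) else y (φ (i/2)) with htdef
  have hte : ∀ j, t (2*j) = x (φ j) := by
    intro j
    simp only [htdef]
    rw [if_pos (by omega)]
    congr 2
    omega
  have hto : ∀ j, t (2*j+1) = y (φ j) := by
    intro j
    simp only [htdef]
    rw [if_neg (by omega)]
    congr 2
    omega
  have htA : ∀ i, t i ∈ A := by
    intro i
    simp only [htdef]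
    split
    · exact hxA _
    · exact hyA _
  have hpair : ∀ j : ℕ, dist (x (φ j)) (y (φ j)) < 1/((j:ℝ)+1) := by
    intro j
    refine lt_of_lt_of_le (hxy (φ j)) ?_
    have h1 : (j:ℝ) + 1 ≤ (φ j : ℝ) + 1 := by
      have h0 : j ≤ φ j := hφ.le_apply
      have : (j:ℝ) ≤ (φ j : ℝ) := by exact_mod_cast h0
      linarith
    exact one_div_le_one_div_of_le (by positivity) h1
  have htqc : LacStatQC θ t := by
    intro ε hε
    obtain ⟨N, hN⟩ := exists_nat_gt (2/ε)
    have hsmall : ∀ j : ℕ, N ≤ j → dist (x (φ j)) (y (φ j)) < ε/2 := by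
      intro j hj
      refine (hpair j).trans_le ?_
      have hj' : (2:ℝ)/ε < (j:ℝ)+1 := by
        have : (N:ℝ) ≤ (j:ℝ) := by exact_mod_cast hj
        linarith
      rw [div_lt_iff₀ hε] at hj'
      rw [div_le_div_iff₀ (by positivity) (by norm_num : (0:ℝ) < 2)]
      nlinarith
    set p : ℕ → Prop := fun j => ε/2 ≤ |(x ∘ φ) (j+1) - (x ∘ φ) j - 0| with hpdef
    have hsub : ∀ r, (Finset.Ioc (θ.k r) (θ.k (r+1))).filter
          (fun i => ε ≤ |t (i+1) - t i - 0|) ⊆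
        ((Finset.Ioc (θ.k r) (θ.k (r+1))).filter (fun i => i < 2*N+1)) ∪
        ((Finset.Ioc (θ.k r) (θ.k (r+1))).filter (fun i => i % 2 = 1 ∧ p (i/2))) := by
      intro r i hi
      simp only [Finset.mem_filter, Finset.mem_union, Finset.mem_Ioc] at hi ⊢
      obtain ⟨hmem, hbadi⟩ := hi
      rcases Nat.even_or_odd i with ⟨j, hj⟩ | ⟨j, hj⟩
      · -- i = 2j : difference is y (φ j) - x (φ j), small for j ≥ N
        have hi2j : i = 2*j := by omega
        subst hi2j
        left
        refine ⟨hmem, ?_⟩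
        by_contra hcon
        have hjN : N ≤ j := by omega
        have := hsmall j hjN
        rw [show 2*j+1 = 2*j+1 from rfl, hto j, hte j, sub_zero] at hbadi
        rw [Real.dist_eq] at this
        rw [abs_sub_comm] at hbadi
        linarith
      · -- i = 2j+1
        have hi2j : i = 2*j+1 := by omega
        subst hi2j
        by_cases hjN : j < N
        · left
          exact ⟨hmem, by omega⟩
        · right
          refine ⟨hmem, by omega, ?_⟩
          have hid : (2*j+1)/2 = j := by omega
          rw [hid]
          have heq : t (2*j+1+1) = x (φ (j+1)) := by
            have : 2*j+1+1 = 2*(j+1) := by omega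
            rw [this, hte]
          rw [heq, hto j, sub_zero] at hbadi
          have hdist := hsmall j (by omega)
          rw [Real.dist_eq] at hdist
          simp only [hpdef, Function.comp_apply, sub_zero]
          have habs : |x (φ (j+1)) - x (φ j)| ≥ |x (φ (j+1)) - y (φ j)| - |x (φ j) - y (φ j)| := by
            have := abs_sub_abs_le_abs_sub (x (φ (j+1)) - y (φ j)) (x (φ j) - y (φ j))
            have heq2 : x (φ (j+1)) - y (φ j) - (x (φ j) - y (φ j)) = x (φ (j+1)) - x (φ j) := by
              ring
            rw [heq2] at this
            linarith
          linarith
    have hp : Tendsto (fun s : ℕ =>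
        ((((Finset.Ioc (θ.k s) (θ.k (s+1))).filter p).card : ℝ)
          / ((θ.k (s+1) - θ.k s : ℕ) : ℝ))) atTop (𝓝 0) := by
      have := hqc (ε/2) (by positivity)
      exact this
    have hdouble := lac_double θ a ha haev p hp
    have hK : Tendsto (fun r : ℕ => ((2*N+1 : ℕ):ℝ)
        / ((θ.k (r+1) - θ.k r : ℕ) : ℝ)) atTop (𝓝 0) :=
      tendsto_const_nhds.div_atTop θ.hcast_tendsto
    apply squeeze_zero (g := fun r => ((2*N+1 : ℕ):ℝ) / ((θ.k (r+1) - θ.k r : ℕ) : ℝ)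
      + (((Finset.Ioc (θ.k r) (θ.k (r+1))).filter (fun i => i % 2 = 1 ∧ p (i/2))).card : ℝ)
        / ((θ.k (r+1) - θ.k r : ℕ) : ℝ))
    · intro r
      positivity
    · intro r
      have hc1 : ((Finset.Ioc (θ.k r) (θ.k (r+1))).filter (fun i => i < 2*N+1)).card
          ≤ 2*N+1 := by
        calc ((Finset.Ioc (θ.k r) (θ.k (r+1))).filter (fun i => i < 2*N+1)).card
            ≤ (Finset.range (2*N+1)).card := by
              apply Finset.card_le_card
              intro i hi
              simp only [Finset.mem_filter] at hi
              exact Finset.mem_range.mpr hi.2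
          _ = 2*N+1 := Finset.card_range _
      have hcc : (((Finset.Ioc (θ.k r) (θ.k (r+1))).filter
            (fun i => ε ≤ |t (i+1) - t i - 0|)).card : ℝ)
          ≤ ((2*N+1 : ℕ):ℝ)
            + (((Finset.Ioc (θ.k r) (θ.k (r+1))).filter (fun i => i % 2 = 1 ∧ p (i/2))).card : ℝ) := by
        have h1 := Finset.card_le_card (hsub r)
        have h2 := Finset.card_union_le
          ((Finset.Ioc (θ.k r) (θ.k (r+1))).filter (fun i => i < 2*N+1))
          ((Finset.Ioc (θ.k r) (θ.k (r+1))).filter (fun i => i % 2 = 1 ∧ p (i/2)))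
        have := le_trans h1 h2
        have h3 := add_le_add_left hc1
          ((Finset.Ioc (θ.k r) (θ.k (r+1))).filter (fun i => i % 2 = 1 ∧ p (i/2))).card
        exact_mod_cast le_trans this h3
      rw [← add_div]
      gcongr
    · simpa using hK.add hdouble
  have himg := hf t htA htqc ε0 hε0
  -- every even index is bad for f ∘ t
  have hlow : ∀ r, (Finset.Ioc (θ.k r) (θ.k (r+1))).filter (fun i => i % 2 = 0) ⊆
      (Finset.Ioc (θ.k r) (θ.k (r+1))).filter
        (fun i => ε0 ≤ |(f ∘ t) (i+1) - (f ∘ t) i - 0|) := by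
    intro r i hi
    simp only [Finset.mem_filter] at hi ⊢
    obtain ⟨hmem, hev⟩ := hi
    refine ⟨hmem, ?_⟩
    obtain ⟨j, hj⟩ : ∃ j, i = 2*j := ⟨i/2, by omega⟩
    subst hj
    simp only [Function.comp_apply, sub_zero]
    rw [show 2*j+1 = 2*j+1 from rfl, hto j, hte j]
    have := hfxy (φ j)
    rw [Real.dist_eq] at this
    rw [abs_sub_comm]
    exact this
  have hev_card : ∀ r, (θ.k (r+1))/2 - (θ.k r)/2
      ≤ ((Finset.Ioc (θ.k r) (θ.k (r+1))).filter (fun i => i % 2 = 0)).card := by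
    intro r
    have h := Finset.card_le_card_of_injOn (fun j => 2*j)
      (s := Finset.Ioc (θ.k r / 2) (θ.k (r+1) / 2))
      (t := (Finset.Ioc (θ.k r) (θ.k (r+1))).filter (fun i => i % 2 = 0))
      ?_ ?_
    · simpa [Nat.card_Ioc] using h
    · intro j hj
      simp only [Finset.mem_coe, Finset.mem_Ioc] at hj
      simp only [Finset.mem_coe, Finset.mem_filter, Finset.mem_Ioc]
      omega
    · intro i _ j _ hij
      simp only at hij
      omega
  have hbig : ∀ᶠ r in atTop, 4 ≤ θ.k (r+1) - θ.k r :=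
    θ.h_tendsto.eventually_ge_atTop 4
  have hsmall2 : ∀ᶠ r in atTop,
      dist ((((Finset.Ioc (θ.k r) (θ.k (r+1))).filter
        (fun i => ε0 ≤ |(f ∘ t) (i+1) - (f ∘ t) i - 0|)).card : ℝ)
          / ((θ.k (r+1) - θ.k r : ℕ) : ℝ)) 0 < 1/4 := by
    have h14 : (0:ℝ) < 1/4 := by norm_num
    have := Metric.tendsto_atTop.mp himg (1/4) h14
    obtain ⟨M, hM⟩ := this
    exact eventually_atTop.mpr ⟨M, hM⟩
  obtain ⟨r, hr4, hrdist⟩ := (hbig.and hsmall2).exists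
  set cnt := (((Finset.Ioc (θ.k r) (θ.k (r+1))).filter
      (fun i => ε0 ≤ |(f ∘ t) (i+1) - (f ∘ t) i - 0|)).card : ℝ) with hcnt
  have hpos := θ.hcast_pos r
  have hge : (1:ℝ)/4 ≤ cnt / ((θ.k (r+1) - θ.k r : ℕ) : ℝ) := by
    rw [le_div_iff₀ hpos]
    have h1 : θ.k (r+1) - θ.k r ≤ 4 * ((θ.k (r+1))/2 - (θ.k r)/2) := by
      have := θ.strictMono (Nat.lt_succ_self r)
      omega
    have h2 : (θ.k (r+1))/2 - (θ.k r)/2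
        ≤ ((Finset.Ioc (θ.k r) (θ.k (r+1))).filter
            (fun i => ε0 ≤ |(f ∘ t) (i+1) - (f ∘ t) i - 0|)).card :=
      le_trans (hev_card r) (Finset.card_le_card (hlow r))
    have h3 : θ.k (r+1) - θ.k r ≤ 4 * ((Finset.Ioc (θ.k r) (θ.k (r+1))).filter
        (fun i => ε0 ≤ |(f ∘ t) (i+1) - (f ∘ t) i - 0|)).card := by omega
    have h4 : ((θ.k (r+1) - θ.k r : ℕ) : ℝ) ≤ 4 * cnt := by
      rw [hcnt]
      exact_mod_cast h3
    linarith
  have hnn : (0:ℝ) ≤ cnt / ((θ.k (r+1) - θ.k r : ℕ) : ℝ) :=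
    div_nonneg (by rw [hcnt]; exact Nat.cast_nonneg _) hpos.le
  rw [Real.dist_eq, sub_zero, abs_of_nonneg hnn] at hrdist
  linarith
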